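/- For every integer d ≥ 2 there exists a constant C > 0, depending only on d, such that for all c ∈ ℝ^d, all r with 0 < r ≤ √d, and every natural number L, one has Σ_{l=0}^{L} #{j ∈ {0,…,2^l−1}^d : the level-l dyadic cube ∏_{i=1}^d [j_i·2^{-l}, (j_i+1)·2^{-l}] intersects the sphere {x ∈ ℝ^d : ‖x − c‖ = r}} ≤ C · 2^{(d−1)L}. -/

import Mathlib

open MeasureTheory Metric Set Finset

/-- The level-`l` dyadic cube of `[0,1]^d` with multi-index `j`:
`∏ᵢ [jᵢ·2^{-l}, (jᵢ+1)·2^{-l}]`. -/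
def dyadicCube (d l : ℕ) (j : Fin d → ℕ) : Set (EuclideanSpace ℝ (Fin d)) :=
  {x | ∀ i, (j i : ℝ) / 2 ^ l ≤ x i ∧ x i ≤ ((j i : ℝ) + 1) / 2 ^ l}

/-- The open interior box of a dyadic cube. -/
def openCube (d l : ℕ) (j : Fin d → ℕ) : Set (EuclideanSpace ℝ (Fin d)) :=
  {x | ∀ i, (j i : ℝ) / 2 ^ l < x i ∧ x i < ((j i : ℝ) + 1) / 2 ^ l}

lemma openCube_eq (d l : ℕ) (j : Fin d → ℕ) :
    openCube d l j = (MeasurableEquiv.toLp 2 (Fin d → ℝ)).symm ⁻¹'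
      (Set.univ.pi fun i => Set.Ioo ((j i : ℝ) / 2 ^ l) (((j i : ℝ) + 1) / 2 ^ l)) := by
  ext x
  simp [openCube, Set.mem_pi, MeasurableEquiv.coe_toLp_symm]

lemma volume_openCube (d l : ℕ) (j : Fin d → ℕ) :
    volume (openCube d l j) = ENNReal.ofReal ((1 / 2 ^ l : ℝ) ^ d) := by
  rw [openCube_eq,
    (EuclideanSpace.volume_preserving_symm_measurableEquiv_toLp (Fin d)).measure_preimage
      (MeasurableSet.univ_pi fun i => measurableSet_Ioo).nullMeasurableSet,
    volume_pi_pi]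
  have h : ∀ i : Fin d, volume (Set.Ioo ((j i : ℝ) / 2 ^ l) (((j i : ℝ) + 1) / 2 ^ l))
      = ENNReal.ofReal ((1 : ℝ) / 2 ^ l) := by
    intro i
    rw [Real.volume_Ioo]
    congr 1
    field_simp; ring
  simp only [h, Finset.prod_const, Finset.card_univ, Fintype.card_fin]
  rw [← ENNReal.ofReal_pow (by positivity)]

lemma openCube_subset (d l : ℕ) (j : Fin d → ℕ) : openCube d l j ⊆ dyadicCube d l j :=
  fun x hx i => ⟨(hx i).1.le, (hx i).2.le⟩

lemma dist_le_of_mem_dyadicCube {d l : ℕ} {j : Fin d → ℕ}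
    {x y : EuclideanSpace ℝ (Fin d)} (hx : x ∈ dyadicCube d l j) (hy : y ∈ dyadicCube d l j) :
    dist x y ≤ Real.sqrt d / 2 ^ l := by
  rw [EuclideanSpace.dist_eq]
  have h1 : ∀ i : Fin d, dist (x i) (y i) ^ 2 ≤ (1 / 2 ^ l : ℝ) ^ 2 := by
    intro i
    have hxi := hx i; have hyi := hy i
    have hlen : ((j i : ℝ) + 1) / 2 ^ l - (j i : ℝ) / 2 ^ l = 1 / 2 ^ l := by field_simp; ring
    have : |x i - y i| ≤ 1 / 2 ^ l := by
      rw [abs_le]; constructor <;> nlinarith [hxi.1, hxi.2, hyi.1, hyi.2]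
    calc dist (x i) (y i) ^ 2 = |x i - y i| ^ 2 := by rw [Real.dist_eq]
      _ ≤ (1 / 2 ^ l : ℝ) ^ 2 := by
          apply pow_le_pow_left₀ (abs_nonneg _) this
  calc Real.sqrt (∑ i, dist (x i) (y i) ^ 2)
      ≤ Real.sqrt (d * (1 / 2 ^ l : ℝ) ^ 2) := by
        apply Real.sqrt_le_sqrt
        calc ∑ i, dist (x i) (y i) ^ 2 ≤ ∑ _i : Fin d, (1 / 2 ^ l : ℝ) ^ 2 :=
              Finset.sum_le_sum fun i _ => h1 i
          _ = d * (1 / 2 ^ l : ℝ) ^ 2 := by simp [mul_comm]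
    _ = Real.sqrt d / 2 ^ l := by
        rw [Real.sqrt_mul (Nat.cast_nonneg d), Real.sqrt_sq (by positivity)]
        field_simp

lemma openCube_disjoint {d l : ℕ} {j j' : Fin d → Fin (2 ^ l)} (h : j ≠ j') :
    Disjoint (openCube d l fun i => (j i : ℕ)) (openCube d l fun i => (j' i : ℕ)) := by
  rw [Set.disjoint_left]
  intro x hx hx'
  obtain ⟨i, hi⟩ : ∃ i, j i ≠ j' i := by
    by_contra hc; push_neg at hc; exact h (funext hc)
  have hpos : (0 : ℝ) < 2 ^ l := by positivity
  have hvi : ((j i : ℕ) : ℝ) ≠ ((j' i : ℕ) : ℝ) := by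
    simp only [ne_eq, Nat.cast_inj]
    exact fun hh => hi (Fin.val_injective hh)
  rcases lt_or_gt_of_ne (fun hh : (j i : ℕ) = (j' i : ℕ) => hvi (by exact_mod_cast hh)) with hlt | hgt
  · have h1 : ((j i : ℕ) : ℝ) + 1 ≤ ((j' i : ℕ) : ℝ) := by exact_mod_cast hlt
    have h2 := (hx i).2
    have h3 := (hx' i).1
    have : (((j i : ℕ) : ℝ) + 1) / 2 ^ l ≤ ((j' i : ℕ) : ℝ) / 2 ^ l := by gcongr
    linarith
  · have h1 : ((j' i : ℕ) : ℝ) + 1 ≤ ((j i : ℕ) : ℝ) := by exact_mod_cast hgt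
    have h2 := (hx' i).2
    have h3 := (hx i).1
    have : (((j' i : ℕ) : ℝ) + 1) / 2 ^ l ≤ ((j i : ℕ) : ℝ) / 2 ^ l := by gcongr
    linarith

lemma pow_sub_pow_le' {x y : ℝ} (hy : 0 ≤ y) (hxy : y ≤ x) (n : ℕ) :
    x ^ n - y ^ n ≤ n * x ^ (n - 1) * (x - y) := by
  have hx : 0 ≤ x := hy.trans hxy
  rw [← geom_sum₂_mul]
  apply mul_le_mul_of_nonneg_right _ (by linarith)
  calc ∑ i ∈ Finset.range n, x ^ i * y ^ (n - 1 - i)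
      ≤ ∑ _i ∈ Finset.range n, x ^ (n - 1) := by
        apply Finset.sum_le_sum
        intro i hi
        rw [Finset.mem_range] at hi
        calc x ^ i * y ^ (n - 1 - i) ≤ x ^ i * x ^ (n - 1 - i) := by
              apply mul_le_mul_of_nonneg_left (pow_le_pow_left₀ hy hxy _) (pow_nonneg hx i)
          _ = x ^ (i + (n - 1 - i)) := (pow_add x i _).symm
          _ = x ^ (n - 1) := by congr 1; omega
    _ = n * x ^ (n - 1) := by simp [mul_comm]

lemma level_bound (d : ℕ) (hd : 2 ≤ d) (c : EuclideanSpace ℝ (Fin d)) (r : ℝ)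
    (hr : 0 < r) (hr2 : r ≤ Real.sqrt d) (l : ℕ) :
    ({j : Fin d → Fin (2 ^ l) |
        (dyadicCube d l (fun i => (j i : ℕ)) ∩ Metric.sphere c r).Nonempty}.ncard : ℝ) ≤
      ((volume (ball (0 : EuclideanSpace ℝ (Fin d)) 1)).toReal *
        (d * (2 * Real.sqrt d) ^ (d - 1) * (2 * Real.sqrt d))) * 2 ^ ((d - 1) * l) := by
  classical
  have hdpos : (0 : ℝ) < d := by positivity
  have hsd : (0 : ℝ) < Real.sqrt d := Real.sqrt_pos.mpr hdpos
  set δ : ℝ := Real.sqrt d / 2 ^ l with hδdef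
  have hδpos : 0 < δ := by positivity
  have hδle : δ ≤ Real.sqrt d := by
    rw [hδdef]
    exact div_le_self hsd.le (one_le_pow₀ one_le_two)
  set a : ℝ := r + δ with hadef
  set m : ℝ := max (r - δ) 0 with hmdef
  have hm0 : 0 ≤ m := le_max_right _ _
  have hma : m ≤ a := by
    rcases le_max_iff.mp (le_refl m) with _ | _ <;>
      simp only [hmdef, hadef, max_le_iff] <;> constructor <;> linarith
  have ha0 : 0 ≤ a := hm0.trans hma
  have ha2 : a ≤ 2 * Real.sqrt d := by
    simp only [hadef]; linarith
  have ham : a - m ≤ 2 * δ := by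
    have : r - δ ≤ m := le_max_left _ _
    simp only [hadef]; linarith
  -- the annulus
  set A : Set (EuclideanSpace ℝ (Fin d)) := closedBall c a \ ball c m with hAdef
  set sJ := {j : Fin d → Fin (2 ^ l) |
      (dyadicCube d l (fun i => (j i : ℕ)) ∩ Metric.sphere c r).Nonempty} with hsJ
  set S : Finset (Fin d → Fin (2 ^ l)) := (Set.toFinite sJ).toFinset with hSdef
  -- each open cube with index in S lies in A
  have hsub : ∀ j ∈ S, openCube d l (fun i => (j i : ℕ)) ⊆ A := by
    intro j hj y hy
    rw [hSdef, Set.Finite.mem_toFinset] at hj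
    obtain ⟨x0, hx0c, hx0s⟩ := hj
    have hyx0 : dist y x0 ≤ δ :=
      dist_le_of_mem_dyadicCube (openCube_subset d l _ hy) hx0c
    have hx0r : dist x0 c = r := mem_sphere.mp hx0s
    have hd1 : dist y c ≤ a := by
      calc dist y c ≤ dist y x0 + dist x0 c := dist_triangle _ _ _
        _ ≤ δ + r := by rw [hx0r]; linarith
        _ = a := by rw [hadef]; ring
    have hd2 : r - δ ≤ dist y c := by
      have := dist_triangle x0 y c
      rw [dist_comm x0 y] at this
      linarith [hx0r ▸ this]
    constructor
    · exact mem_closedBall.mpr hd1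
    · intro hmem
      rw [mem_ball] at hmem
      rcases le_or_gt 0 (r - δ) with h | h
      · rw [hmdef, max_eq_left h] at hmem; linarith
      · rw [hmdef, max_eq_right h.le] at hmem
        exact absurd hmem (not_lt.mpr dist_nonneg)
  -- disjointness and measure counting
  have hdisj : (S : Set (Fin d → Fin (2 ^ l))).PairwiseDisjoint
      (fun j => openCube d l (fun i => (j i : ℕ))) := by
    intro j _ j' _ hne
    exact openCube_disjoint hne
  have hmeas : ∀ j : Fin d → Fin (2 ^ l), MeasurableSet (openCube d l (fun i => (j i : ℕ))) := by
    intro j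
    rw [openCube_eq]
    exact (MeasurableEquiv.toLp 2 (Fin d → ℝ)).symm.measurable
      (MeasurableSet.univ_pi fun i => measurableSet_Ioo)
  have hcount : (S.card : ENNReal) * ENNReal.ofReal ((1 / 2 ^ l : ℝ) ^ d) ≤ volume A := by
    calc (S.card : ENNReal) * ENNReal.ofReal ((1 / 2 ^ l : ℝ) ^ d)
        = ∑ j ∈ S, volume (openCube d l (fun i => (j i : ℕ))) := by
          simp [volume_openCube, Finset.sum_const, mul_comm]
      _ = volume (⋃ j ∈ S, openCube d l (fun i => (j i : ℕ))) :=
          (measure_biUnion_finset hdisj fun j _ => hmeas j).symm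
      _ ≤ volume A := measure_mono (Set.iUnion₂_subset hsub)
  -- compute the volume of the annulus
  have hballm : ball c (r - δ) = ball c m := by
    rcases le_or_gt 0 (r - δ) with h | h
    · rw [hmdef, max_eq_left h]
    · rw [hmdef, max_eq_right h.le, Metric.ball_eq_empty.mpr h.le, Metric.ball_eq_empty.mpr le_rfl]
  have hNontriv : Nontrivial (EuclideanSpace ℝ (Fin d)) := by
    have h : Module.finrank ℝ (EuclideanSpace ℝ (Fin d)) = d := finrank_euclideanSpace_fin
    exact Module.nontrivial_of_finrank_pos (R := ℝ) (by omega)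
  have hvolA : volume A = ENNReal.ofReal (a ^ d - m ^ d) *
      volume (ball (0 : EuclideanSpace ℝ (Fin d)) 1) := by
    rw [hAdef, measure_diff (Metric.ball_subset_closedBall.trans
          (closedBall_subset_closedBall hma)) measurableSet_ball.nullMeasurableSet
          measure_ball_lt_top.ne,
      Measure.addHaar_closedBall volume c ha0, Measure.addHaar_ball volume c hm0,
      finrank_euclideanSpace_fin, ← ENNReal.sub_mul (fun _ _ => measure_ball_lt_top.ne),
      ENNReal.ofReal_sub _ (pow_nonneg hm0 d)]
  -- pass to real numbers
  have hBfin : volume (ball (0 : EuclideanSpace ℝ (Fin d)) 1) ≠ ⊤ := measure_ball_lt_top.ne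
  set B' : ℝ := (volume (ball (0 : EuclideanSpace ℝ (Fin d)) 1)).toReal with hB'
  have hB'0 : 0 ≤ B' := ENNReal.toReal_nonneg
  have hΔ0 : 0 ≤ a ^ d - m ^ d := by
    have := pow_le_pow_left₀ hm0 hma d
    linarith
  have hreal : (S.card : ℝ) * (1 / 2 ^ l : ℝ) ^ d ≤ (a ^ d - m ^ d) * B' := by
    have h1 := hcount.trans_eq hvolA
    have h2 := (ENNReal.toReal_le_toReal
      (ENNReal.mul_ne_top (by simp) ENNReal.ofReal_ne_top)
      (ENNReal.mul_ne_top ENNReal.ofReal_ne_top hBfin)).mpr h1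
    rwa [ENNReal.toReal_mul, ENNReal.toReal_mul, ENNReal.toReal_natCast,
        ENNReal.toReal_ofReal (by positivity), ENNReal.toReal_ofReal hΔ0] at h2
  -- estimate the annulus width
  have hΔle : a ^ d - m ^ d ≤ (d * (2 * Real.sqrt d) ^ (d - 1)) * (2 * δ) := by
    calc a ^ d - m ^ d ≤ d * a ^ (d - 1) * (a - m) := pow_sub_pow_le' hm0 hma d
      _ ≤ d * (2 * Real.sqrt d) ^ (d - 1) * (2 * δ) := by
          have h1 : a ^ (d - 1) ≤ (2 * Real.sqrt d) ^ (d - 1) := pow_le_pow_left₀ ha0 ha2 _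
          have h2 : 0 ≤ a - m := by linarith
          have h3 : (0:ℝ) ≤ d * a ^ (d-1) := by positivity
          calc d * a ^ (d - 1) * (a - m) ≤ d * (2 * Real.sqrt d) ^ (d - 1) * (a - m) := by
                apply mul_le_mul_of_nonneg_right _ h2
                apply mul_le_mul_of_nonneg_left h1 (by positivity)
            _ ≤ d * (2 * Real.sqrt d) ^ (d - 1) * (2 * δ) := by
                apply mul_le_mul_of_nonneg_left ham (by positivity)
  -- the key exponent identity
  have hexp : (d - 1) * l + l = l * d := by
    have h3 : d - 1 + 1 = d := by omega
    calc (d - 1) * l + l = ((d - 1) + 1) * l := by ring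
      _ = d * l := by rw [h3]
      _ = l * d := mul_comm _ _
  have hkey : (2 : ℝ) ^ ((d - 1) * l) * ((1 : ℝ) / 2 ^ l) ^ d = 1 / 2 ^ l := by
    rw [div_pow, one_pow, ← pow_mul, ← hexp, pow_add]
    field_simp
  -- conclude
  have hvpos : (0 : ℝ) < ((1 : ℝ) / 2 ^ l) ^ d := by positivity
  have hfinal : (S.card : ℝ) * ((1 : ℝ) / 2 ^ l) ^ d ≤
      ((volume (ball (0 : EuclideanSpace ℝ (Fin d)) 1)).toReal *
        (d * (2 * Real.sqrt d) ^ (d - 1) * (2 * Real.sqrt d))) * 2 ^ ((d - 1) * l) *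
        ((1 : ℝ) / 2 ^ l) ^ d := by
    calc (S.card : ℝ) * ((1 : ℝ) / 2 ^ l) ^ d ≤ (a ^ d - m ^ d) * B' := hreal
      _ ≤ ((d * (2 * Real.sqrt d) ^ (d - 1)) * (2 * δ)) * B' :=
          mul_le_mul_of_nonneg_right hΔle hB'0
      _ = ((volume (ball (0 : EuclideanSpace ℝ (Fin d)) 1)).toReal *
            (d * (2 * Real.sqrt d) ^ (d - 1) * (2 * Real.sqrt d))) * 2 ^ ((d - 1) * l) *
            ((1 : ℝ) / 2 ^ l) ^ d := by
          rw [← hB']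
          rw [mul_assoc (B' * _), hkey, hδdef]
          ring
  have hcard : (S.card : ℝ) ≤
      ((volume (ball (0 : EuclideanSpace ℝ (Fin d)) 1)).toReal *
        (d * (2 * Real.sqrt d) ^ (d - 1) * (2 * Real.sqrt d))) * 2 ^ ((d - 1) * l) :=
    le_of_mul_le_mul_right (by exact hfinal) hvpos
  have hncard : sJ.ncard = S.card := Set.ncard_eq_toFinset_card sJ (Set.toFinite sJ)
  rw [hsJ] at hncard
  rw [hncard]
  exact hcard

lemma geom_bound (d : ℕ) (hd : 2 ≤ d) (L : ℕ) :
    ∑ l ∈ Finset.range (L + 1), (2 : ℝ) ^ ((d - 1) * l) ≤ 2 * 2 ^ ((d - 1) * L) := by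
  induction L with
  | zero => simp
  | succ L ih =>
    rw [Finset.sum_range_succ]
    have h1 : (2 : ℝ) * 2 ^ ((d - 1) * L) ≤ 2 ^ ((d - 1) * (L + 1)) := by
      rw [show (2:ℝ) * 2 ^ ((d-1)*L) = 2 ^ ((d-1)*L + 1) by rw [pow_succ]; ring]
      apply pow_le_pow_right₀ one_le_two
      have : 1 ≤ d - 1 := by omega
      calc (d-1)*L + 1 ≤ (d-1)*L + (d-1) := by omega
        _ = (d-1)*(L+1) := by ring
    linarith

theorem stmt_13 (d : ℕ) (hd : 2 ≤ d) :
    ∃ C : ℝ, 0 < C ∧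
      ∀ (c : EuclideanSpace ℝ (Fin d)) (r : ℝ), 0 < r → r ≤ Real.sqrt d →
        ∀ L : ℕ,
          ((∑ l ∈ Finset.range (L + 1),
              {j : Fin d → Fin (2 ^ l) |
                (dyadicCube d l (fun i => (j i : ℕ)) ∩ Metric.sphere c r).Nonempty}.ncard : ℕ) : ℝ) ≤
            C * 2 ^ ((d - 1) * L) := by
  set K : ℝ := (volume (ball (0 : EuclideanSpace ℝ (Fin d)) 1)).toReal *
      (d * (2 * Real.sqrt d) ^ (d - 1) * (2 * Real.sqrt d)) with hK
  have hK0 : 0 ≤ K := by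
    apply mul_nonneg ENNReal.toReal_nonneg
    positivity
  refine ⟨2 * K + 2, by linarith, fun c r hr hr2 L => ?_⟩
  push_cast
  calc ∑ l ∈ Finset.range (L + 1),
        ({j : Fin d → Fin (2 ^ l) |
          (dyadicCube d l (fun i => (j i : ℕ)) ∩ Metric.sphere c r).Nonempty}.ncard : ℝ)
      ≤ ∑ l ∈ Finset.range (L + 1), K * 2 ^ ((d - 1) * l) :=
        Finset.sum_le_sum fun l _ => level_bound d hd c r hr hr2 l
    _ = K * ∑ l ∈ Finset.range (L + 1), (2:ℝ) ^ ((d - 1) * l) := by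
        rw [Finset.mul_sum]
    _ ≤ K * (2 * 2 ^ ((d - 1) * L)) :=
        mul_le_mul_of_nonneg_left (geom_bound d hd L) hK0
    _ ≤ (2 * K + 2) * 2 ^ ((d - 1) * L) := by
        have : (0:ℝ) < 2 ^ ((d-1)*L) := by positivity
        nlinarith
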